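/- arXiv:1202.0518 — 3 statements merged into one kernel-verified Lean document; each statement's English description precedes it below -/
import Mathlib

section
/- (Gentle operator lemma for ensembles) Let {p(x), ρ_x} be a finite ensemble of density operators with average state ρ = Σ_x p(x) ρ_x, and let Λ satisfy 0 ≤ Λ ≤ I and Tr[Λρ] ≥ 1 − ε. Then Σ_x p(x)·‖√Λ ρ_x √Λ − ρ_x‖₁ ≤ 2√ε. -/
open Matrix
open scoped ComplexOrder

/-- The square root of a positive semidefinite matrix, as `Matrix.PosSemidef.sqrt` was defined
in older Mathlib. -/
noncomputable def Matrix.PosSemidef.oldSqrt {n : Type*} [Fintype n] [DecidableEq n]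
    {A : Matrix n n ℂ} (hA : A.PosSemidef) : Matrix n n ℂ :=
  hA.1.eigenvectorUnitary.1 * diagonal ((↑) ∘ (Real.sqrt ·) ∘ hA.1.eigenvalues) *
    (star hA.1.eigenvectorUnitary : Matrix n n ℂ)

/-- The trace norm ‖A‖₁ = Tr √(AᴴA) of a complex matrix. -/
noncomputable def traceNorm {n : Type*} [Fintype n] [DecidableEq n] (A : Matrix n n ℂ) : ℝ :=
  ((Matrix.posSemidef_conjTranspose_mul_self A).oldSqrt.trace).re

section OldSqrtPort
open scoped MatrixOrder

lemma Matrix.PosSemidef.oldSqrt_eq_cfcSqrt {n : Type*} [Fintype n] [DecidableEq n]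
    {A : Matrix n n ℂ} (hA : A.PosSemidef) : hA.oldSqrt = CFC.sqrt A := by
  rw [CFC.sqrt_eq_real_sqrt A hA.nonneg, cfcₙ_eq_cfc, hA.1.cfc_eq, IsHermitian.cfc,
    Unitary.conjStarAlgAut_apply]
  rfl

lemma Matrix.PosSemidef.oldSqrt_mul_self {n : Type*} [Fintype n] [DecidableEq n]
    {A : Matrix n n ℂ} (hA : A.PosSemidef) : hA.oldSqrt * hA.oldSqrt = A := by
  rw [hA.oldSqrt_eq_cfcSqrt]
  exact CFC.sqrt_mul_sqrt_self A hA.nonneg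

lemma Matrix.PosSemidef.posSemidef_oldSqrt {n : Type*} [Fintype n] [DecidableEq n]
    {A : Matrix n n ℂ} (hA : A.PosSemidef) : hA.oldSqrt.PosSemidef := by
  rw [hA.oldSqrt_eq_cfcSqrt]
  exact (CFC.sqrt_nonneg A).posSemidef

lemma Matrix.PosSemidef.eq_oldSqrt_of_sq_eq {n : Type*} [Fintype n] [DecidableEq n]
    {B : Matrix n n ℂ} (hB : B.PosSemidef) (A : Matrix n n ℂ) (hA : A.PosSemidef)
    (h : B ^ 2 = A) : B = hA.oldSqrt := by
  rw [hA.oldSqrt_eq_cfcSqrt, ← h, CFC.sqrt_sq B hB.nonneg]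

end OldSqrtPort

noncomputable section
namespace GentleAux
variable {n : Type*} [Fintype n] [DecidableEq n]

/-- conjugated diagonal matrix w.r.t. the eigenbasis of a Hermitian matrix -/
def cd {M : Matrix n n ℂ} (hM : M.IsHermitian) (f : n → ℂ) : Matrix n n ℂ :=
  (hM.eigenvectorUnitary : Matrix n n ℂ) * diagonal f * star (hM.eigenvectorUnitary : Matrix n n ℂ)

variable {M : Matrix n n ℂ} (hM : M.IsHermitian)

lemma cd_mul (f g : n → ℂ) : cd hM f * cd hM g = cd hM (fun i => f i * g i) := by
  set V : Matrix n n ℂ := (hM.eigenvectorUnitary : Matrix n n ℂ) with hV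
  have h : star V * V = 1 := Matrix.mem_unitaryGroup_iff'.mp hM.eigenvectorUnitary.2
  show V * diagonal f * star V * (V * diagonal g * star V) = V * diagonal (fun i => f i * g i) * star V
  simp only [mul_assoc]
  rw [← mul_assoc (star V) V, h, one_mul, ← mul_assoc (diagonal f) (diagonal g),
    diagonal_mul_diagonal]

lemma cd_conjTranspose (f : n → ℂ) : (cd hM f)ᴴ = cd hM (fun i => starRingEnd ℂ (f i)) := by
  unfold cd
  simp [conjTranspose_mul, diagonal_conjTranspose, mul_assoc, star_eq_conjTranspose]
  rfl

lemma cd_trace (f : n → ℂ) : trace (cd hM f) = ∑ i, f i := by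
  unfold cd
  have h : star (hM.eigenvectorUnitary : Matrix n n ℂ) * (hM.eigenvectorUnitary : Matrix n n ℂ) = 1 :=
    Matrix.mem_unitaryGroup_iff'.mp hM.eigenvectorUnitary.2
  rw [trace_mul_comm, ← mul_assoc, h, one_mul, trace_diagonal]

lemma cd_one : cd hM (fun _ => 1) = 1 := by
  unfold cd
  have h : (hM.eigenvectorUnitary : Matrix n n ℂ) * star (hM.eigenvectorUnitary : Matrix n n ℂ) = 1 :=
    Matrix.mem_unitaryGroup_iff.mp hM.eigenvectorUnitary.2
  simpa [diagonal_one] using h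

lemma cd_posSemidef {f : n → ℂ} (hf : ∀ i, 0 ≤ f i) : (cd hM f).PosSemidef :=
  (Matrix.PosSemidef.diagonal hf).mul_mul_conjTranspose_same _

lemma cd_posSemidef_iff {f : n → ℂ} : (cd hM f).PosSemidef ↔ ∀ i, 0 ≤ f i := by
  constructor
  · intro h
    have h2 := h.conjTranspose_mul_mul_same (hM.eigenvectorUnitary : Matrix n n ℂ)
    have hU : star (hM.eigenvectorUnitary : Matrix n n ℂ) * (hM.eigenvectorUnitary : Matrix n n ℂ) = 1 :=
      Matrix.mem_unitaryGroup_iff'.mp hM.eigenvectorUnitary.2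
    unfold cd at h2
    rw [← star_eq_conjTranspose, mul_assoc, mul_assoc, hU, mul_one, ← mul_assoc, hU,
      one_mul] at h2
    exact Matrix.posSemidef_diagonal_iff.mp h2
  · exact cd_posSemidef hM

lemma cd_spectral : M = cd hM (fun i => (hM.eigenvalues i : ℂ)) := by
  simpa [cd, Function.comp_def] using hM.spectral_theorem

lemma cd_sqrt (hA : M.PosSemidef) :
    hA.oldSqrt = cd hA.1 (fun i => (Real.sqrt (hA.1.eigenvalues i) : ℂ)) := rfl


lemma trace_CS (A B : Matrix n n ℂ) :
    (trace (Aᴴ * B)).re ≤ Real.sqrt (trace (Aᴴ * A)).re * Real.sqrt (trace (Bᴴ * B)).re := by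
  set u : EuclideanSpace ℂ (n × n) := WithLp.toLp 2 (fun q : n × n => A q.1 q.2) with hu
  set v : EuclideanSpace ℂ (n × n) := WithLp.toLp 2 (fun q : n × n => B q.1 q.2) with hv
  have h1 : trace (Aᴴ * B) = inner ℂ u v := by
    simp [trace, Matrix.mul_apply, Matrix.diag, conjTranspose_apply, PiLp.inner_apply,
      RCLike.inner_apply, Fintype.sum_prod_type, hu, hv]
    rw [Finset.sum_comm]
    exact Finset.sum_congr rfl fun _ _ => Finset.sum_congr rfl fun _ _ => mul_comm _ _
  have key : ∀ (C : Matrix n n ℂ) (w : EuclideanSpace ℂ (n × n)),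
      (∀ q : n × n, w q = C q.1 q.2) → Real.sqrt (trace (Cᴴ * C)).re = ‖w‖ := by
    intro C w hw
    rw [EuclideanSpace.norm_eq]
    congr 1
    simp only [hw]
    simp [trace, Matrix.mul_apply, Matrix.diag, conjTranspose_apply, Fintype.sum_prod_type]
    rw [Finset.sum_comm]
    congr 1; ext j; congr 1; ext i
    rw [Complex.sq_norm, Complex.normSq_apply]
  calc (trace (Aᴴ * B)).re = (inner ℂ u v : ℂ).re := by rw [h1]
    _ ≤ ‖(inner ℂ u v : ℂ)‖ := Complex.re_le_norm _
    _ ≤ ‖u‖ * ‖v‖ := norm_inner_le_norm u v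
    _ = Real.sqrt (trace (Aᴴ * A)).re * Real.sqrt (trace (Bᴴ * B)).re := by
        rw [key A u (fun q => rfl), key B v (fun q => rfl)]


lemma trace_re_nonneg {A : Matrix n n ℂ} (hA : A.PosSemidef) : 0 ≤ (trace A).re := by
  have h : ∀ i, 0 ≤ A i i := by
    intro i
    exact hA.diag_nonneg
  rw [trace]
  rw [Complex.re_sum]
  exact Finset.sum_nonneg fun i _ => (Complex.le_def.mp (h i)).1

lemma trace_mul_re_nonneg {A B : Matrix n n ℂ} (hA : A.PosSemidef) (hB : B.PosSemidef) :
    0 ≤ (trace (A * B)).re := by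
  have h1 : A * B = hA.oldSqrt * (hA.oldSqrt * B) := by rw [← mul_assoc, hA.oldSqrt_mul_self]
  have h2 : trace (A * B) = trace (hA.oldSqrt * B * hA.oldSqrt) := by
    rw [h1, trace_mul_comm, mul_assoc]
  rw [h2]
  refine trace_re_nonneg ?_
  have := hB.mul_mul_conjTranspose_same hA.oldSqrt
  rwa [hA.posSemidef_oldSqrt.1.eq] at this

lemma exists_dual {M : Matrix n n ℂ} (hM : M.IsHermitian) :
    ∃ W : Matrix n n ℂ, W.IsHermitian ∧ W * W = 1 ∧ traceNorm M = (trace (W * M)).re := by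
  set lam := hM.eigenvalues with hlam
  set w : n → ℂ := fun i => if 0 ≤ lam i then 1 else -1 with hw
  refine ⟨cd hM w, ?_, ?_, ?_⟩
  · show (cd hM w)ᴴ = cd hM w
    rw [cd_conjTranspose]
    have hfun : (fun i => starRingEnd ℂ (w i)) = w := by
      funext i; by_cases h : 0 ≤ lam i <;> simp [hw, h]
    rw [hfun]
  · rw [cd_mul]
    have : (fun i => w i * w i) = fun _ => (1 : ℂ) := by
      funext i; by_cases h : 0 ≤ lam i <;> simp [hw, h]
    rw [this, cd_one]
  · set N := cd hM (fun i => ((|lam i| : ℝ) : ℂ)) with hN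
    have hNpsd : N.PosSemidef := cd_posSemidef hM fun i => by
      rw [← Complex.ofReal_zero]
      exact_mod_cast abs_nonneg _
    have hMM : Mᴴ * M = cd hM (fun i => ((lam i : ℂ) * lam i)) := by
      rw [hM.eq]
      conv_lhs => rw [cd_spectral hM, cd_mul]
    have hsq : N ^ 2 = Mᴴ * M := by
      rw [pow_two, hN, cd_mul, hMM]
      have hfun : (fun i => ((|lam i| : ℝ) : ℂ) * ((|lam i| : ℝ) : ℂ))
          = fun i => ((lam i : ℂ) * lam i) := by
        funext i
        rw [← Complex.ofReal_mul, ← Complex.ofReal_mul, abs_mul_abs_self]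
      rw [hfun]
    have hNsqrt : N = (Matrix.posSemidef_conjTranspose_mul_self M).oldSqrt :=
      hNpsd.eq_oldSqrt_of_sq_eq _ _ hsq
    have hWM : cd hM w * M = N := by
      have hfun : (fun i => w i * (lam i : ℂ)) = fun i => ((|lam i| : ℝ) : ℂ) := by
        funext i
        by_cases h : 0 ≤ lam i
        · simp [hw, h, abs_of_nonneg h]
        · push_neg at h
          simp [hw, not_le.mpr h, abs_of_neg h, Complex.ofReal_neg]
      have h2 : cd hM w * cd hM (fun i => (lam i : ℂ)) = N := by
        rw [cd_mul, hN, hfun]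
      rw [← cd_spectral hM] at h2
      exact h2
    rw [hWM, traceNorm, ← hNsqrt]


lemma cd_sub {M : Matrix n n ℂ} (hM : M.IsHermitian) (f g : n → ℂ) :
    cd hM f - cd hM g = cd hM (fun i => f i - g i) := by
  unfold cd
  rw [← Matrix.sub_mul, ← Matrix.mul_sub, diagonal_sub]

lemma key_psd {Λ : Matrix n n ℂ} (hΛ : Λ.PosSemidef)
    (hΛI : ((1 : Matrix n n ℂ) - Λ).PosSemidef) :
    (((1 : Matrix n n ℂ) - Λ) - ((1 : Matrix n n ℂ) - hΛ.oldSqrt) * ((1 : Matrix n n ℂ) - hΛ.oldSqrt)).PosSemidef := by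
  set μ := hΛ.1.eigenvalues with hμ
  have h1 : (1 : Matrix n n ℂ) = cd hΛ.1 (fun _ => 1) := (cd_one hΛ.1).symm
  have hΛspec : Λ = cd hΛ.1 (fun i => (μ i : ℂ)) := cd_spectral hΛ.1
  have hS : hΛ.oldSqrt = cd hΛ.1 (fun i => (Real.sqrt (μ i) : ℂ)) := cd_sqrt hΛ
  have hμ1 : ∀ i, μ i ≤ 1 := by
    intro i
    have h2 : cd hΛ.1 (fun i => 1 - (μ i : ℂ)) = ((1 : Matrix n n ℂ) - Λ) := by
      rw [← cd_sub, cd_one, ← hΛspec]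
    rw [← h2] at hΛI
    have h3 := (cd_posSemidef_iff hΛ.1).mp hΛI i
    have h4 : ((1 - μ i : ℝ) : ℂ) = 1 - (μ i : ℂ) := by push_cast; ring
    rw [← h4] at h3
    have := (Complex.le_def.mp h3).1
    simp at this
    linarith
  have hrw : cd hΛ.1 (fun i => ((2 * (Real.sqrt (μ i) - μ i) : ℝ) : ℂ))
      = ((1 : Matrix n n ℂ) - Λ) - ((1 : Matrix n n ℂ) - hΛ.oldSqrt) * ((1 : Matrix n n ℂ) - hΛ.oldSqrt) := by
    have hfun : (fun i => ((2 * (Real.sqrt (μ i) - μ i) : ℝ) : ℂ))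
        = fun i => ((1 : ℂ) - (μ i : ℂ)) -
            ((1 - (Real.sqrt (μ i) : ℂ)) * (1 - (Real.sqrt (μ i) : ℂ))) := by
      funext i
      have hsq : (Real.sqrt (μ i) : ℂ) * (Real.sqrt (μ i) : ℂ) = (μ i : ℂ) := by
        rw [← Complex.ofReal_mul, Real.mul_self_sqrt (hΛ.eigenvalues_nonneg i)]
      push_cast
      rw [← hsq]
      ring
    rw [hfun, ← cd_sub, ← cd_mul, ← cd_sub, ← cd_sub, cd_one, ← hΛspec, ← hS]
  rw [← hrw]
  refine cd_posSemidef _ fun i => ?_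
  rw [← Complex.ofReal_zero]
  rw [Complex.real_le_real]
  have h5 : Real.sqrt (μ i) ≤ 1 := by
    rw [show (1:ℝ) = Real.sqrt 1 by simp]
    exact Real.sqrt_le_sqrt (hμ1 i)
  have h6 : 0 ≤ Real.sqrt (μ i) := Real.sqrt_nonneg _
  nlinarith [Real.sq_sqrt (hΛ.eigenvalues_nonneg i), Real.sqrt_nonneg (μ i),
    Real.mul_self_sqrt (hΛ.eigenvalues_nonneg i)]


lemma gentle_single {Λ ρ : Matrix n n ℂ} (hΛ : Λ.PosSemidef)
    (hΛI : ((1 : Matrix n n ℂ) - Λ).PosSemidef)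
    (hρ : ρ.PosSemidef) (hρtr : ρ.trace = 1) :
    traceNorm (hΛ.oldSqrt * ρ * hΛ.oldSqrt - ρ) ≤ 2 * Real.sqrt (trace (((1 : Matrix n n ℂ) - Λ) * ρ)).re := by
  set S := hΛ.oldSqrt with hSdef
  have hS : S.IsHermitian := hΛ.posSemidef_oldSqrt.1
  have hSS : S * S = Λ := hΛ.oldSqrt_mul_self
  set R := hρ.oldSqrt with hRdef
  have hR : R.IsHermitian := hρ.posSemidef_oldSqrt.1
  have hRR : R * R = ρ := hρ.oldSqrt_mul_self
  set e := (trace (((1 : Matrix n n ℂ) - Λ) * ρ)).re with he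
  have he0 : 0 ≤ e := trace_mul_re_nonneg hΛI hρ
  have htr1 : (trace (((1:Matrix n n ℂ) - S) * ((1:Matrix n n ℂ) - S) * ρ)).re ≤ e := by
    have hsub : ((1:Matrix n n ℂ) - Λ) * ρ - ((1:Matrix n n ℂ) - S) * ((1:Matrix n n ℂ) - S) * ρ
        = (((1:Matrix n n ℂ) - Λ) - ((1:Matrix n n ℂ) - S) * ((1:Matrix n n ℂ) - S)) * ρ := by
      noncomm_ring
    have hpos := trace_mul_re_nonneg (key_psd hΛ hΛI) hρ
    rw [← hsub, trace_sub, Complex.sub_re] at hpos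
    linarith
  have htrΛ : (trace (Λ * ρ)).re ≤ 1 := by
    have hsub : ((1:Matrix n n ℂ) - Λ) * ρ = ρ - Λ * ρ := by noncomm_ring
    have : e = 1 - (trace (Λ * ρ)).re := by
      rw [he, hsub, trace_sub, Complex.sub_re, hρtr, Complex.one_re]
    linarith
  -- dual witness
  have hM' : (S * ρ * S - ρ).IsHermitian := by
    show (S * ρ * S - ρ)ᴴ = S * ρ * S - ρ
    rw [conjTranspose_sub, conjTranspose_mul, conjTranspose_mul, hS.eq, hρ.1.eq]
    rw [mul_assoc]
  obtain ⟨W, hW, hWW, hWtn⟩ := exists_dual hM'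
  set U := -W with hUdef
  have hU : Uᴴ = U := by rw [hUdef, conjTranspose_neg, hW.eq]
  have hUU : U * U = 1 := by rw [hUdef, neg_mul_neg, hWW]
  have hdec : W * (S * ρ * S - ρ) = U * (((1:Matrix n n ℂ) - S) * ρ) + U * (S * ρ * ((1:Matrix n n ℂ) - S)) := by
    rw [hUdef]; noncomm_ring
  -- term 1
  set C1 := U * ((1:Matrix n n ℂ) - S) * R with hC1def
  have hC1H : C1ᴴ = R * ((1:Matrix n n ℂ) - S) * U := by
    rw [hC1def, conjTranspose_mul, conjTranspose_mul, hU, hR.eq, conjTranspose_sub,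
      conjTranspose_one, hS.eq, mul_assoc]
  have ht1 : (trace (U * (((1:Matrix n n ℂ) - S) * ρ))).re ≤ Real.sqrt e := by
    have hfac : U * (((1:Matrix n n ℂ) - S) * ρ) = C1 * R := by
      rw [hC1def, ← hRR]; noncomm_ring
    have hcs := trace_CS C1ᴴ R
    rw [conjTranspose_conjTranspose] at hcs
    have e1 : trace (C1 * C1ᴴ) = trace (((1:Matrix n n ℂ) - S) * ((1:Matrix n n ℂ) - S) * ρ) := by
      have h1 : C1 * C1ᴴ = U * (((1:Matrix n n ℂ) - S) * ρ * ((1:Matrix n n ℂ) - S) * U) := by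
        rw [hC1H, hC1def, ← hRR]; noncomm_ring
      rw [h1, trace_mul_comm]
      have h2 : ((1:Matrix n n ℂ) - S) * ρ * ((1:Matrix n n ℂ) - S) * U * U
          = ((1:Matrix n n ℂ) - S) * ρ * ((1:Matrix n n ℂ) - S) := by
        rw [mul_assoc, hUU, mul_one]
      rw [h2, trace_mul_comm, ← mul_assoc]
    have e2 : trace (Rᴴ * R) = 1 := by rw [hR.eq, hRR, hρtr]
    rw [hfac]
    calc (trace (C1 * R)).re
        ≤ Real.sqrt (trace (C1 * C1ᴴ)).re * Real.sqrt (trace (Rᴴ * R)).re := hcs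
      _ = Real.sqrt (trace (((1:Matrix n n ℂ) - S) * ((1:Matrix n n ℂ) - S) * ρ)).re := by
          rw [e1, e2, Complex.one_re, Real.sqrt_one, mul_one]
      _ ≤ Real.sqrt e := Real.sqrt_le_sqrt htr1
  -- term 2
  set C2 := U * S * R with hC2def
  set B2 := R * ((1:Matrix n n ℂ) - S) with hB2def
  have hC2H : C2ᴴ = R * S * U := by
    rw [hC2def, conjTranspose_mul, conjTranspose_mul, hU, hR.eq, hS.eq, mul_assoc]
  have hB2H : B2ᴴ = ((1:Matrix n n ℂ) - S) * R := by
    rw [hB2def, conjTranspose_mul, hR.eq, conjTranspose_sub, conjTranspose_one, hS.eq]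
  have ht2 : (trace (U * (S * ρ * ((1:Matrix n n ℂ) - S)))).re ≤ Real.sqrt e := by
    have hfac : U * (S * ρ * ((1:Matrix n n ℂ) - S)) = C2 * B2 := by
      rw [hC2def, hB2def, ← hRR]; noncomm_ring
    have hcs := trace_CS C2ᴴ B2
    rw [conjTranspose_conjTranspose] at hcs
    have e1 : trace (C2 * C2ᴴ) = trace (Λ * ρ) := by
      have h1 : C2 * C2ᴴ = U * (S * ρ * S * U) := by
        rw [hC2H, hC2def, ← hRR]; noncomm_ring
      rw [h1, trace_mul_comm]
      have h2 : S * ρ * S * U * U = S * ρ * S := by rw [mul_assoc, hUU, mul_one]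
      rw [h2, trace_mul_comm, ← mul_assoc, ← hSS]
    have e2 : trace (B2ᴴ * B2) = trace (((1:Matrix n n ℂ) - S) * ((1:Matrix n n ℂ) - S) * ρ) := by
      rw [hB2H, hB2def, ← mul_assoc, mul_assoc _ R R, hRR, trace_mul_comm, ← mul_assoc]
    rw [hfac]
    calc (trace (C2 * B2)).re
        ≤ Real.sqrt (trace (C2 * C2ᴴ)).re * Real.sqrt (trace (B2ᴴ * B2)).re := hcs
      _ ≤ 1 * Real.sqrt e := by
          refine mul_le_mul ?_ ?_ (Real.sqrt_nonneg _) one_pos.le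
          · rw [e1, show (1:ℝ) = Real.sqrt 1 by rw [Real.sqrt_one]]
            exact Real.sqrt_le_sqrt htrΛ
          · rw [e2]
            exact Real.sqrt_le_sqrt htr1
      _ = Real.sqrt e := one_mul _
  rw [hWtn, hdec, trace_add, Complex.add_re]
  linarith


end GentleAux
end



/-- Gentle operator lemma for ensembles: if a measurement operator 0 ≤ Λ ≤ I succeeds
with probability at least 1 − ε on the average state ρ = Σ_x p(x) ρ_x of a finite
ensemble of density operators, then the expected trace distance satisfies
Σ_x p(x) ‖√Λ ρ_x √Λ − ρ_x‖₁ ≤ 2√ε. -/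
theorem gentle_operator_ensembles {d X : Type*} [Fintype d] [DecidableEq d] [Fintype X]
    (p : X → ℝ) (hp0 : ∀ x, 0 ≤ p x) (hp1 : ∑ x, p x = 1)
    (ρ : X → Matrix d d ℂ)
    (hρ : ∀ x, (ρ x).PosSemidef) (hρtr : ∀ x, (ρ x).trace = 1)
    (Λ : Matrix d d ℂ) (hΛ : Λ.PosSemidef) (hΛI : ((1 : Matrix d d ℂ) - Λ).PosSemidef)
    (ε : ℝ) (hε0 : 0 ≤ ε)
    (hsucc : 1 - ε ≤ (Λ * ∑ x, (p x : ℂ) • ρ x).trace.re) :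
    ∑ x, p x * traceNorm (hΛ.oldSqrt * ρ x * hΛ.oldSqrt - ρ x) ≤ 2 * Real.sqrt ε := by
  classical
  set e : X → ℝ := fun x => (Matrix.trace (((1 : Matrix d d ℂ) - Λ) * ρ x)).re with hedef
  have he0 : ∀ x, 0 ≤ e x := fun x => GentleAux.trace_mul_re_nonneg hΛI (hρ x)
  have step1 : ∑ x, p x * traceNorm (hΛ.oldSqrt * ρ x * hΛ.oldSqrt - ρ x)
      ≤ ∑ x, p x * (2 * Real.sqrt (e x)) := by
    refine Finset.sum_le_sum fun x _ => ?_
    exact mul_le_mul_of_nonneg_left (GentleAux.gentle_single hΛ hΛI (hρ x) (hρtr x)) (hp0 x)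
  have step2 : ∑ x, p x * (2 * Real.sqrt (e x)) = 2 * ∑ x, p x * Real.sqrt (e x) := by
    rw [Finset.mul_sum]
    congr 1; funext x; ring
  have step3 : ∑ x, p x * Real.sqrt (e x) ≤ Real.sqrt (∑ x, p x * e x) := by
    have h := Real.sum_sqrt_mul_sqrt_le Finset.univ hp0 (fun x => mul_nonneg (hp0 x) (he0 x))
    have h2 : ∀ x : X, Real.sqrt (p x) * Real.sqrt (p x * e x) = p x * Real.sqrt (e x) := by
      intro x
      rw [Real.sqrt_mul (hp0 x), ← mul_assoc, Real.mul_self_sqrt (hp0 x)]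
    rw [Finset.sum_congr rfl (fun x _ => h2 x), hp1, Real.sqrt_one, one_mul] at h
    exact h
  have step4 : ∑ x, p x * e x ≤ ε := by
    have hsum : (Matrix.trace (((1 : Matrix d d ℂ) - Λ) * ∑ x, (p x : ℂ) • ρ x))
        = ∑ x, (p x : ℂ) * Matrix.trace (((1 : Matrix d d ℂ) - Λ) * ρ x) := by
      rw [Finset.mul_sum, Matrix.trace_sum]
      congr 1; funext x
      rw [Matrix.mul_smul, Matrix.trace_smul]
      simp
    have hre : (Matrix.trace (((1 : Matrix d d ℂ) - Λ) * ∑ x, (p x : ℂ) • ρ x)).re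
        = ∑ x, p x * e x := by
      rw [hsum, Complex.re_sum]
      congr 1; funext x
      rw [hedef]
      simp [Complex.mul_re]
    have htrρbar : (Matrix.trace (∑ x, (p x : ℂ) • ρ x)) = 1 := by
      rw [Matrix.trace_sum]
      have : ∀ x : X, Matrix.trace ((p x : ℂ) • ρ x) = (p x : ℂ) := by
        intro x; rw [Matrix.trace_smul, hρtr x]; simp
      rw [Finset.sum_congr rfl fun x _ => this x]
      rw [← Complex.ofReal_sum, hp1, Complex.ofReal_one]
    have hexp : ((1 : Matrix d d ℂ) - Λ) * ∑ x, (p x : ℂ) • ρ x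
        = (∑ x, (p x : ℂ) • ρ x) - Λ * ∑ x, (p x : ℂ) • ρ x := by
      rw [Matrix.sub_mul, Matrix.one_mul]
    have : (Matrix.trace (((1 : Matrix d d ℂ) - Λ) * ∑ x, (p x : ℂ) • ρ x)).re
        = 1 - (Λ * ∑ x, (p x : ℂ) • ρ x).trace.re := by
      rw [hexp, Matrix.trace_sub, Complex.sub_re, htrρbar, Complex.one_re]
    rw [hre] at this
    linarith
  calc ∑ x, p x * traceNorm (hΛ.oldSqrt * ρ x * hΛ.oldSqrt - ρ x)
      ≤ 2 * ∑ x, p x * Real.sqrt (e x) := by rw [← step2]; exact step1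
    _ ≤ 2 * Real.sqrt (∑ x, p x * e x) := by linarith
    _ ≤ 2 * Real.sqrt ε := by
        have := Real.sqrt_le_sqrt step4
        linarith
end

section
/- (Sen's non-commutative union bound) Let σ be a positive semidefinite operator with Tr σ ≤ 1 on a finite-dimensional Hilbert space, and let Π₁, …, Π_N be orthogonal projectors. Then Tr σ − Tr[Π_N ⋯ Π₁ σ Π₁ ⋯ Π_N] ≤ 2·√(Σ_{i=1}^N Tr[(I − Π_i) σ]). -/
open Matrix
open scoped ComplexOrder

noncomputable def semb {d : Type*} [Fintype d] (X : Matrix d d ℂ) :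
    EuclideanSpace ℂ (d × d) := WithLp.toLp 2 (fun p : d × d => X p.1 p.2)

set_option linter.unusedSectionVars false

section aux
variable {d : Type*} [Fintype d] [DecidableEq d]

lemma semb_inner (X Y : Matrix d d ℂ) :
    (inner ℂ (semb X) (semb Y) : ℂ) = (Xᴴ * Y).trace := by
  simp only [PiLp.inner_apply, semb, RCLike.inner_apply, Matrix.trace, Matrix.diag,
    Matrix.mul_apply, Matrix.conjTranspose_apply]
  rw [Fintype.sum_prod_type]
  rw [Finset.sum_comm]
  exact Finset.sum_congr rfl fun _ _ => Finset.sum_congr rfl fun _ _ => mul_comm _ _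

lemma semb_sub (X Y : Matrix d d ℂ) : semb (X - Y) = semb X - semb Y := rfl
lemma semb_add (X Y : Matrix d d ℂ) : semb (X + Y) = semb X + semb Y := rfl

lemma semb_norm_sq (X : Matrix d d ℂ) : ‖semb X‖ ^ 2 = (Xᴴ * X).trace.re := by
  rw [← semb_inner, ← inner_self_eq_norm_sq (𝕜 := ℂ)]
  rfl

lemma semb_pyth (Q X : Matrix d d ℂ) (hq : Qᴴ = Q) (hq2 : Q * Q = Q) :
    ‖semb X‖ ^ 2 = ‖semb (Q * X)‖ ^ 2 + ‖semb ((1 - Q) * X)‖ ^ 2 := by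
  have hX : X = Q * X + (1 - Q) * X := by rw [← add_mul]; simp
  have h0 : Q * ((1 - Q) * X) = 0 := by
    rw [sub_mul, one_mul, mul_sub, ← Matrix.mul_assoc, hq2, sub_self]
  have horth : (inner ℂ (semb (Q * X)) (semb ((1 - Q) * X)) : ℂ) = 0 := by
    rw [semb_inner, conjTranspose_mul, hq, Matrix.mul_assoc, h0]
    simp
  calc ‖semb X‖ ^ 2 = ‖semb (Q * X) + semb ((1 - Q) * X)‖ ^ 2 := by
        rw [← semb_add, ← hX]
    _ = ‖semb (Q * X)‖ ^ 2 + 2 * (RCLike.re (inner ℂ (semb (Q * X)) (semb ((1 - Q) * X)) : ℂ))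
          + ‖semb ((1 - Q) * X)‖ ^ 2 := norm_add_sq _ _
    _ = _ := by rw [horth]; simp

lemma semb_contract (Q X : Matrix d d ℂ) (hq : Qᴴ = Q) (hq2 : Q * Q = Q) :
    ‖semb (Q * X)‖ ^ 2 ≤ ‖semb X‖ ^ 2 := by
  rw [semb_pyth Q X hq hq2]
  nlinarith [sq_nonneg ‖semb ((1 - Q) * X)‖]

/-- Sen's key lemma. -/
lemma sen_key (A : Matrix d d ℂ) :
    ∀ L : List (Matrix d d ℂ), (∀ Q ∈ L, Qᴴ = Q ∧ Q * Q = Q) →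
    ‖semb ((1 - L.prod) * A)‖ ^ 2 ≤ (L.map fun Q => ‖semb ((1 - Q) * A)‖ ^ 2).sum := by
  intro L
  induction L with
  | nil =>
    intro _
    simp only [List.prod_nil, sub_self, Matrix.zero_mul, List.map_nil, List.sum_nil]
    have : semb (0 : Matrix d d ℂ) = 0 := rfl
    rw [this]
    simp
  | cons Q L ih =>
    intro h
    have hq := h Q (by simp)
    have hL : ∀ R ∈ L, Rᴴ = R ∧ R * R = R := fun R hR => h R (by simp [hR])
    have hdec : (1 - (Q :: L).prod) * A = (1 - Q) * A + Q * ((1 - L.prod) * A) := by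
      simp only [List.prod_cons]; noncomm_ring
    have h0 : (1 - Q) * (Q * ((1 - L.prod) * A)) = 0 := by
      simp only [sub_mul, one_mul, ← Matrix.mul_assoc, hq.2, sub_self, Matrix.zero_mul]
    have horth : (inner ℂ (semb ((1 - Q) * A)) (semb (Q * ((1 - L.prod) * A))) : ℂ) = 0 := by
      rw [semb_inner, conjTranspose_mul, conjTranspose_sub, conjTranspose_one, hq.1,
        Matrix.mul_assoc, h0]
      simp
    calc ‖semb ((1 - (Q :: L).prod) * A)‖ ^ 2
        = ‖semb ((1 - Q) * A) + semb (Q * ((1 - L.prod) * A))‖ ^ 2 := by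
          rw [← semb_add, ← hdec]
      _ = ‖semb ((1 - Q) * A)‖ ^ 2
            + 2 * (RCLike.re (inner ℂ (semb ((1 - Q) * A)) (semb (Q * ((1 - L.prod) * A))) : ℂ))
            + ‖semb (Q * ((1 - L.prod) * A))‖ ^ 2 := norm_add_sq _ _
      _ = ‖semb ((1 - Q) * A)‖ ^ 2 + ‖semb (Q * ((1 - L.prod) * A))‖ ^ 2 := by
          rw [horth]; simp
      _ ≤ ‖semb ((1 - Q) * A)‖ ^ 2 + ‖semb ((1 - L.prod) * A)‖ ^ 2 := by
          have := semb_contract Q ((1 - L.prod) * A) hq.1 hq.2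
          linarith
      _ ≤ _ := by
          simp only [List.map_cons, List.sum_cons]
          have := ih hL
          linarith

end aux

/-- Sen's non-commutative union bound: for a subnormalized state σ ≥ 0, Tr σ ≤ 1, and
orthogonal projectors Π₁, …, Π_N,
Tr σ − Tr[Π_N ⋯ Π₁ σ Π₁ ⋯ Π_N] ≤ 2 √(Σᵢ Tr[(I − Πᵢ)σ]). -/
theorem sen_noncommutative_union_bound {d : Type*} [Fintype d] [DecidableEq d]
    (N : ℕ) (σ : Matrix d d ℂ) (hσ : σ.PosSemidef) (hσtr : σ.trace.re ≤ 1)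
    (P : Fin N → Matrix d d ℂ)
    (hherm : ∀ i, (P i).IsHermitian) (hproj : ∀ i, P i * P i = P i) :
    σ.trace.re -
      ((List.ofFn P).reverse.prod * σ * (List.ofFn P).prod).trace.re ≤
    2 * Real.sqrt (∑ i, (((1 : Matrix d d ℂ) - P i) * σ).trace.re) := by
  open scoped MatrixOrder in
  set A := CFC.sqrt σ with hAdef
  open scoped MatrixOrder in
  have hAH : Aᴴ = A := (CFC.sqrt_nonneg σ).posSemidef.1
  open scoped MatrixOrder in
  have hAA : A * A = σ := CFC.sqrt_mul_sqrt_self σ hσ.nonneg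
  set M := (List.ofFn P).reverse.prod with hMdef
  -- (List.ofFn P).prod = Mᴴ
  have hMH : Mᴴ = (List.ofFn P).prod := by
    rw [hMdef, conjTranspose_list_prod, List.map_reverse, List.reverse_reverse,
      List.map_ofFn]
    have : conjTranspose ∘ P = P := funext fun i => (hherm i).eq
    rw [this]
  -- trace σ as norm squared
  have htrσ : σ.trace.re = ‖semb A‖ ^ 2 := by
    rw [semb_norm_sq, hAH, hAA]
  -- trace of the measured state
  have htrM : ((List.ofFn P).reverse.prod * σ * (List.ofFn P).prod).trace.re
      = ‖semb (M * A)‖ ^ 2 := by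
    rw [← hMdef, ← hMH]
    have h1 : M * σ * Mᴴ = (M * A) * ((M * A)ᴴ) := by
      rw [conjTranspose_mul, hAH, ← hAA]; noncomm_ring
    rw [h1, Matrix.trace_mul_comm, semb_norm_sq]
  -- each error term
  have hterm : ∀ i, (((1 : Matrix d d ℂ) - P i) * σ).trace.re
      = ‖semb ((1 - P i) * A)‖ ^ 2 := by
    intro i
    have hQH : ((1 : Matrix d d ℂ) - P i)ᴴ = 1 - P i := by
      rw [conjTranspose_sub, conjTranspose_one, (hherm i).eq]
    have hQ2 : ((1 : Matrix d d ℂ) - P i) * (1 - P i) = 1 - P i := by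
      simp only [mul_sub, sub_mul, hproj i, one_mul, mul_one]; abel
    have h1 : ((1 - P i) * A)ᴴ * ((1 - P i) * A) = A * ((1 - P i) * A) := by
      rw [conjTranspose_mul, hQH, hAH, Matrix.mul_assoc,
        ← Matrix.mul_assoc ((1 : Matrix d d ℂ) - P i), hQ2]
    rw [semb_norm_sq, h1, ← hAA, ← Matrix.mul_assoc,
      Matrix.trace_mul_comm ((1 - P i) * A) A]
  -- the error sum
  have hprojmem : ∀ Q ∈ (List.ofFn P).reverse, Qᴴ = Q ∧ Q * Q = Q := by
    intro Q hQ
    rw [List.mem_reverse, List.mem_ofFn] at hQ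
    obtain ⟨i, rfl⟩ := hQ
    exact ⟨(hherm i).eq, hproj i⟩
  have hkey := sen_key A ((List.ofFn P).reverse) hprojmem
  rw [List.map_reverse, List.sum_reverse, List.map_ofFn, List.sum_ofFn, ← hMdef] at hkey
  have hS : (∑ i, (((1 : Matrix d d ℂ) - P i) * σ).trace.re)
      = ∑ i, ‖semb ((1 - P i) * A)‖ ^ 2 := Finset.sum_congr rfl fun i _ => hterm i
  set S : ℝ := ∑ i, (((1 : Matrix d d ℂ) - P i) * σ).trace.re with hSdef
  have hw : semb ((1 - M) * A) = semb A - semb (M * A) := by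
    rw [sub_mul, one_mul, semb_sub]
  have hkey' : ‖semb A - semb (M * A)‖ ^ 2 ≤ S := by
    rw [← hw, hS]; exact hkey
  set a := semb A with hadef
  set m := semb (M * A) with hmdef
  have hn1 : ‖a‖ ≤ 1 := by
    have h2 : ‖a‖ ^ 2 ≤ 1 := by rw [← htrσ]; exact hσtr
    nlinarith [norm_nonneg a]
  have hcs : RCLike.re (inner ℂ a (a - m) : ℂ) ≤ ‖a‖ * ‖a - m‖ := by
    calc RCLike.re (inner ℂ a (a - m) : ℂ) ≤ |RCLike.re (inner ℂ a (a - m) : ℂ)| := le_abs_self _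
      _ ≤ ‖(inner ℂ a (a - m) : ℂ)‖ := RCLike.abs_re_le_norm _
      _ ≤ ‖a‖ * ‖a - m‖ := norm_inner_le_norm a (a - m)
  have hexp : ‖m‖ ^ 2 = ‖a‖ ^ 2 - 2 * RCLike.re (inner ℂ a (a - m) : ℂ) + ‖a - m‖ ^ 2 := by
    have : m = a - (a - m) := by abel
    calc ‖m‖ ^ 2 = ‖a - (a - m)‖ ^ 2 := by rw [← this]
      _ = _ := norm_sub_sq a (a - m)
  have hwle : ‖a - m‖ ≤ Real.sqrt S := by
    rw [← Real.sqrt_sq (norm_nonneg (a - m))]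
    exact Real.sqrt_le_sqrt hkey'
  rw [htrσ, htrM]
  have hsq : (0:ℝ) ≤ Real.sqrt S := Real.sqrt_nonneg S
  nlinarith [norm_nonneg (a - m), sq_nonneg ‖a - m‖, hcs, hexp, hwle, hn1]
end

section
/- For the special case of two projectors, if σ is a density operator and P, Q are orthogonal projectors, then 1 − Tr[Q P σ P Q] ≤ 2·√(Tr[(I − P)σ] + Tr[(I − Q)σ]). -/
open Matrix
open scoped ComplexOrder
open scoped InnerProductSpace


noncomputable def toEuc {d : Type*} [Fintype d] (A : Matrix d d ℂ) :
    EuclideanSpace ℂ (d × d) := WithLp.toLp 2 (fun p : d × d => A p.1 p.2)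

lemma toEuc_inner {d : Type*} [Fintype d] (A B : Matrix d d ℂ) :
    ⟪toEuc A, toEuc B⟫_ℂ = (Aᴴ * B).trace := by
  simp only [PiLp.inner_apply, RCLike.inner_apply, toEuc, Matrix.trace, Matrix.diag,
    Matrix.mul_apply, Matrix.conjTranspose_apply, Fintype.sum_prod_type, PiLp.toLp_apply]
  rw [Finset.sum_comm]
  simp [mul_comm]

lemma toEuc_sub {d : Type*} [Fintype d] (A B : Matrix d d ℂ) :
    toEuc (A - B) = toEuc A - toEuc B := rfl

lemma norm_sq_toEuc {d : Type*} [Fintype d] (A : Matrix d d ℂ) :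
    ‖toEuc A‖ ^ 2 = (Aᴴ * A).trace.re := by
  rw [norm_sq_eq_re_inner (𝕜 := ℂ), toEuc_inner]
  rfl

lemma trace_re_nonneg' {d : Type*} [Fintype d] [DecidableEq d] {X : Matrix d d ℂ}
    (hX : X.PosSemidef) : 0 ≤ X.trace.re := by
  have h : ∀ i, 0 ≤ (X i i).re := fun i => by
    have := hX.re_dotProduct_nonneg (Pi.single i 1)
    simpa [Matrix.mulVec_single, dotProduct, Pi.single_apply, Finset.sum_ite_eq] using this
  rw [Matrix.trace]
  simp only [Complex.re_sum]
  exact Finset.sum_nonneg fun i _ => h i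

/-- The N = 2 instance of Sen's non-commutative union bound: for a density operator σ
and orthogonal projectors P, Q,
1 − Tr[Q P σ P Q] ≤ 2 √(Tr[(I − P)σ] + Tr[(I − Q)σ]). -/
theorem sen_union_bound_two_projectors {d : Type*} [Fintype d] [DecidableEq d]
    (σ P Q : Matrix d d ℂ)
    (hσ : σ.PosSemidef) (hσtr : σ.trace = 1)
    (hP : P.IsHermitian) (hPP : P * P = P)
    (hQ : Q.IsHermitian) (hQQ : Q * Q = Q) :
    1 - (Q * P * σ * P * Q).trace.re ≤
      2 * Real.sqrt ((((1 : Matrix d d ℂ) - P) * σ).trace.re +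
        (((1 : Matrix d d ℂ) - Q) * σ).trace.re) := by
  classical
  obtain ⟨S, hSH, hSS⟩ : ∃ S : Matrix d d ℂ, Sᴴ = S ∧ S * S = σ :=
    open scoped MatrixOrder in
    ⟨CFC.sqrt σ, (CFC.sqrt_nonneg σ).posSemidef.isHermitian, CFC.sqrt_mul_sqrt_self σ hσ.nonneg⟩
  set e1 := (((1 : Matrix d d ℂ) - P) * σ).trace.re with he1
  set e2 := (((1 : Matrix d d ℂ) - Q) * σ).trace.re with he2
  set x := toEuc S with hxdef
  set y := toEuc (Q * P * S) with hydef
  -- hermitian facts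
  have h1P : ((1 : Matrix d d ℂ) - P).PosSemidef := by
    have : ((1 : Matrix d d ℂ) - P)ᴴ * ((1 : Matrix d d ℂ) - P) = 1 - P := by
      rw [conjTranspose_sub, conjTranspose_one, hP.eq]
      simp [Matrix.mul_sub, Matrix.sub_mul, hPP]
    rw [← this]; exact posSemidef_conjTranspose_mul_self _
  have h1Q : ((1 : Matrix d d ℂ) - Q).PosSemidef := by
    have : ((1 : Matrix d d ℂ) - Q)ᴴ * ((1 : Matrix d d ℂ) - Q) = 1 - Q := by
      rw [conjTranspose_sub, conjTranspose_one, hQ.eq]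
      simp [Matrix.mul_sub, Matrix.sub_mul, hQQ]
    rw [← this]; exact posSemidef_conjTranspose_mul_self _
  -- norm of x is 1
  have hx2 : ‖x‖ ^ 2 = 1 := by
    rw [hxdef, norm_sq_toEuc, hSH, hSS, hσtr, Complex.one_re]
  have hx1 : ‖x‖ = 1 := by
    have := Real.sqrt_sq (norm_nonneg x)
    rw [hx2, Real.sqrt_one] at this; exact this.symm
  -- ‖y‖² equals the trace term
  have hy2 : ‖y‖ ^ 2 = (Q * P * σ * P * Q).trace.re := by
    rw [hydef, norm_sq_toEuc]
    congr 1
    have hA : (Q * P * S)ᴴ = S * P * Q := by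
      simp [conjTranspose_mul, hSH, hP.eq, hQ.eq, mul_assoc]
    rw [hA]
    calc (S * P * Q * (Q * P * S)).trace
        = (S * P * Q * P * S).trace := by
          congr 1
          simp only [mul_assoc]
          rw [← mul_assoc Q Q, hQQ]
      _ = (S * (S * P * Q * P)).trace := by
          rw [Matrix.trace_mul_comm (S * P * Q * P) S]
      _ = (σ * (P * Q * P)).trace := by
          congr 1
          rw [← hSS]; simp only [mul_assoc]
      _ = (P * Q * P * σ).trace := Matrix.trace_mul_comm _ _
      _ = (P * (Q * P * σ)).trace := by congr 1; simp only [mul_assoc]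
      _ = (Q * P * σ * P).trace := Matrix.trace_mul_comm _ _
      _ = (Q * P * σ * P * Q).trace := by
          rw [Matrix.trace_mul_comm (Q * P * σ * P) Q]
          congr 1
          simp only [mul_assoc]
          rw [← mul_assoc Q Q, hQQ]
  -- ‖y‖ ≤ 1
  have hy1 : ‖y‖ ≤ 1 := by
    have hpsd : (Sᴴ * ((1 : Matrix d d ℂ) - P * Q * P) * S).PosSemidef := by
      apply Matrix.PosSemidef.conjTranspose_mul_mul_same
      have hdecomp : (1 : Matrix d d ℂ) - P * Q * P = (1 - P) + Pᴴ * (1 - Q) * P := by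
        rw [hP.eq]
        simp [Matrix.mul_sub, Matrix.sub_mul, hPP, mul_assoc]
      rw [hdecomp]
      exact h1P.add (h1Q.conjTranspose_mul_mul_same P)
    have htr : (Sᴴ * ((1 : Matrix d d ℂ) - P * Q * P) * S).trace.re
        = 1 - ‖y‖ ^ 2 := by
      rw [hSH, hy2]
      have : S * ((1 : Matrix d d ℂ) - P * Q * P) * S
          = S * S - S * (P * Q * P) * S := by
        simp [Matrix.mul_sub, Matrix.sub_mul, mul_assoc]
      rw [this, Matrix.trace_sub, hSS, hσtr]
      have : (S * (P * Q * P) * S).trace = (Q * P * σ * P * Q).trace := by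
        calc (S * (P * Q * P) * S).trace
            = (S * (S * (P * Q * P))).trace := Matrix.trace_mul_comm _ _
          _ = (σ * (P * Q * P)).trace := by congr 1; rw [← hSS]; simp only [mul_assoc]
          _ = (P * Q * P * σ).trace := Matrix.trace_mul_comm _ _
          _ = (P * (Q * P * σ)).trace := by congr 1; simp only [mul_assoc]
          _ = (Q * P * σ * P).trace := Matrix.trace_mul_comm _ _
          _ = (Q * P * σ * P * Q).trace := by
              rw [Matrix.trace_mul_comm (Q * P * σ * P) Q]
              congr 1
              simp only [mul_assoc]
              rw [← mul_assoc Q Q, hQQ]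
      rw [this]
      simp [Complex.sub_re, Complex.one_re]
    have h0 : 0 ≤ 1 - ‖y‖ ^ 2 := htr ▸ trace_re_nonneg' hpsd
    nlinarith [norm_nonneg y]
  -- ‖x - y‖² ≤ e1 + e2
  have hxy : ‖x - y‖ ^ 2 ≤ e1 + e2 := by
    rw [hxdef, hydef, ← toEuc_sub, norm_sq_toEuc]
    have hA : (S - Q * P * S)ᴴ = S - S * P * Q := by
      simp [conjTranspose_sub, conjTranspose_mul, hSH, hP.eq, hQ.eq, mul_assoc]
    rw [hA]
    have hexp : (S - S * P * Q) * (S - Q * P * S)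
        = S * ((1 : Matrix d d ℂ) - Q) * S + (((1:Matrix d d ℂ) - P) * S)ᴴ * Q * (((1:Matrix d d ℂ) - P) * S) := by
      rw [conjTranspose_mul, conjTranspose_sub, conjTranspose_one, hP.eq, hSH]
      simp only [Matrix.mul_sub, Matrix.sub_mul, Matrix.one_mul, Matrix.mul_one]
      simp only [mul_assoc]
      rw [← mul_assoc Q Q, hQQ]
      abel
    rw [hexp, Matrix.trace_add]
    rw [Complex.add_re]
    have t1 : (S * ((1 : Matrix d d ℂ) - Q) * S).trace.re = e2 := by
      rw [mul_assoc, Matrix.trace_mul_comm S (((1 : Matrix d d ℂ) - Q) * S), mul_assoc, hSS, he2]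
    have t2 : ((((1:Matrix d d ℂ) - P) * S)ᴴ * Q * (((1:Matrix d d ℂ) - P) * S)).trace.re ≤ e1 := by
      set B := ((1:Matrix d d ℂ) - P) * S with hB
      have hmono : 0 ≤ (Bᴴ * ((1 : Matrix d d ℂ) - Q) * B).trace.re :=
        trace_re_nonneg' (h1Q.conjTranspose_mul_mul_same B)
      have hsplit : (Bᴴ * ((1 : Matrix d d ℂ) - Q) * B).trace.re
          = (Bᴴ * B).trace.re - (Bᴴ * Q * B).trace.re := by
        have : Bᴴ * ((1 : Matrix d d ℂ) - Q) * B = Bᴴ * B - Bᴴ * Q * B := by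
          simp [Matrix.mul_sub, Matrix.sub_mul]
        rw [this, Matrix.trace_sub, Complex.sub_re]
      have hBB : (Bᴴ * B).trace.re = e1 := by
        rw [hB]
        have hBH : (((1:Matrix d d ℂ) - P) * S)ᴴ = S * ((1:Matrix d d ℂ) - P) := by
          rw [conjTranspose_mul, conjTranspose_sub, conjTranspose_one, hP.eq, hSH]
        rw [hBH, he1]
        have : (S * ((1:Matrix d d ℂ) - P) * (((1:Matrix d d ℂ) - P) * S)).trace
            = (((1:Matrix d d ℂ) - P) * σ).trace := by
          have hid : ((1:Matrix d d ℂ) - P) * ((1:Matrix d d ℂ) - P) = (1:Matrix d d ℂ) - P := by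
            simp [Matrix.mul_sub, Matrix.sub_mul, hPP]
          calc (S * ((1:Matrix d d ℂ) - P) * (((1:Matrix d d ℂ) - P) * S)).trace
              = (S * (((1:Matrix d d ℂ) - P) * S)).trace := by
                congr 1
                simp only [mul_assoc]
                rw [← mul_assoc ((1:Matrix d d ℂ) - P) ((1:Matrix d d ℂ) - P), hid]
            _ = (((1:Matrix d d ℂ) - P) * S * S).trace := by
                rw [Matrix.trace_mul_comm S (((1:Matrix d d ℂ) - P) * S)]
            _ = (((1:Matrix d d ℂ) - P) * σ).trace := by rw [← hSS, mul_assoc]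
        rw [this]
      linarith [hmono, hsplit ▸ hmono]
    linarith [t1, t2]
  -- finish
  have hfinal : Real.sqrt (‖x - y‖ ^ 2) ≤ Real.sqrt (e1 + e2) := Real.sqrt_le_sqrt hxy
  rw [Real.sqrt_sq (norm_nonneg _)] at hfinal
  have hrev : ‖x‖ - ‖y‖ ≤ ‖x - y‖ := norm_sub_norm_le x y
  rw [hx1] at hrev
  have key : 1 - (Q * P * σ * P * Q).trace.re ≤ 2 * ‖x - y‖ := by
    rw [← hy2]
    nlinarith [norm_nonneg y, norm_nonneg (x - y)]
  linarith
end
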